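/- The 4th order 2-dimensional tensor A with a_{1111}=1, a_{1222}=−1, a_{1122}=1, a_{2222}=1, a_{2111}=−1, a_{2211}=1 and all other entries zero, giving (A x^3)_1 = x_1³ − x_2³ + x_1x_2² and (A x^3)_2 = x_2³ − x_1³ + x_2x_1², is a P tensor: for every nonzero x ∈ ℝ² there is i ∈ {1,2} with x_i(A x^3)_i > 0. -/
import Mathlib

/-- The 4th order 2-dimensional tensor with
`(A x^3)_1 = x_1³ - x_2³ + x_1x_2²`, `(A x^3)_2 = x_2³ - x_1³ + x_2x_1²`
is a P tensor. -/
theorem stmt_16 :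
    ∀ x : Fin 2 → ℝ, x ≠ 0 →
      ∃ i : Fin 2,
        x i * (![x 0 ^ 3 - x 1 ^ 3 + x 0 * x 1 ^ 2,
                 x 1 ^ 3 - x 0 ^ 3 + x 1 * x 0 ^ 2] i) > 0 := by
  intro x hx
  have hab : x 0 ≠ 0 ∨ x 1 ≠ 0 := by
    by_contra h
    push_neg at h
    apply hx
    funext i
    fin_cases i <;> simp [h.1, h.2]
  by_contra h
  push_neg at h
  have h0 := h 0
  have h1 := h 1
  simp only [Matrix.cons_val_zero, Matrix.cons_val_one, Matrix.head_cons] at h0 h1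
  have hpos : x 0 ^ 2 + x 1 ^ 2 > 0 := by
    rcases hab with h' | h' <;> positivity
  nlinarith [sq_nonneg (x 0 - x 1), sq_nonneg (x 0 + x 1), sq_nonneg (x 0 * x 1), mul_pos hpos hpos]
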